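/- Let φ : Γ(B) → Γ(B') be an A-module morphism of section modules of vector bundles over S, and define F_φ^x : E_x → E_x' by F_φ^x(v) = φ(s)(x) for any section s with s(x) = v. Then F_φ^x is well defined (independent of the choice of s), F-linear, and satisfies the equivariance F_φ^y ∘ g = g ∘ F_φ^{g⁻¹y} for all g ∈ G, y ∈ S. -/

import Mathlib

/-- an `A`-module morphism `φ : Γ(B) → Γ(B')` of section modules
(k-linear and `G`-equivariant) induces, for each `x ∈ S`, a well-defined
`F`-linear fibre map `F_φ^x : E_x → E'_x` with `F_φ^x(s(x)) = φ(s)(x)`,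
satisfying the equivariance `F_φ^y ∘ g = g ∘ F_φ^{g⁻¹ y}`. -/
theorem fibre_maps_of_morphism (S F G : Type*) [Field F] [Group G]
    [MulAction G S]
    (E E' : S → Type*)
    [∀ x, AddCommGroup (E x)] [∀ x, Module F (E x)]
    [∀ x, AddCommGroup (E' x)] [∀ x, Module F (E' x)]
    (ρ : ∀ (g : G) (x : S), E (g⁻¹ • x) →ₗ[F] E x)
    (ρ' : ∀ (g : G) (x : S), E' (g⁻¹ • x) →ₗ[F] E' x)
    (φ : (∀ x, E x) →ₗ[S → F] (∀ x, E' x))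
    (hequiv : ∀ (g : G) (s : ∀ x, E x) (x : S),
      φ (fun y => ρ g y (s (g⁻¹ • y))) x = ρ' g x (φ s (g⁻¹ • x))) :
    ∃ Fφ : ∀ x : S, E x →ₗ[F] E' x,
      (∀ (s : ∀ x, E x) (x : S), Fφ x (s x) = φ s x) ∧
      (∀ (g : G) (x : S) (v : E (g⁻¹ • x)),
        Fφ x (ρ g x v) = ρ' g x (Fφ (g⁻¹ • x) v)) := by
  classical
  -- the fibre map: evaluate φ on the section supported at x with value v
  refine ⟨fun x =>
    { toFun := fun v => φ (Pi.single x v) x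
      map_add' := fun v w => by
        show φ (Pi.single x (v + w)) x = φ (Pi.single x v) x + φ (Pi.single x w) x
        rw [Pi.single_add, map_add, Pi.add_apply]
      map_smul' := fun c v => by
        have h : Pi.single (M := E) x (c • v) = (fun _ : S => c) • Pi.single x v := by
          funext y
          by_cases hy : y = x
          · subst hy; simp
          · simp [Pi.single_eq_of_ne hy]
        show φ (Pi.single x (c • v)) x = c • φ (Pi.single x v) x
        rw [h, LinearMap.map_smul]
        rfl }, ?_, ?_⟩
  · intro s x
    have h : Pi.single (M := E) x (s x)
        = (fun y : S => if y = x then (1 : F) else 0) • s := by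
      funext y
      by_cases hy : y = x
      · subst hy; simp
      · simp [Pi.single_eq_of_ne hy, hy]
    have := congrFun (φ.map_smul (fun y : S => if y = x then (1 : F) else 0) s) x
    simp only [Pi.smul_apply', if_pos rfl] at this
    simp only [LinearMap.coe_mk, AddHom.coe_mk, h]
    rw [this]
    simp
  · intro g x v
    have h : (fun y => ρ g y (Pi.single (g⁻¹ • x) v (g⁻¹ • y)))
        = Pi.single (M := E) x (ρ g x v) := by
      funext y
      by_cases hy : y = x
      · subst hy; simp
      · have : g⁻¹ • y ≠ g⁻¹ • x := fun h => hy (by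
          have := congrArg (fun z => g • z) h
          simpa using this)
        simp [Pi.single_eq_of_ne hy, Pi.single_eq_of_ne this]
    simp only [LinearMap.coe_mk, AddHom.coe_mk]
    rw [← h, hequiv g (Pi.single (g⁻¹ • x) v) x]
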